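/- arXiv:math/0512421 — 2 statements merged into one kernel-verified Lean document; each statement's English description precedes it below -/
import Mathlib

section
/- The circulant graph G_{{4,5}} embeds as a subgraph into the circulant graph G_{{3,4}}: G_{{4,5}} ↪ G_{{3,4}}. Moreover, G_{{4,5}} embeds as a subgraph into G_{{2,3}}: G_{{4,5}} ↪ G_{{2,3}}. -/
open SimpleGraph

/-- The circulant graph `G_D` on `ZMod 10`: distinct `i, j` are adjacent iff
`i - j ∈ D` or `j - i ∈ D`. -/
def circ (D : Set (ZMod 10)) : SimpleGraph (ZMod 10) :=
  SimpleGraph.fromRel (fun i j => i - j ∈ D)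

/-- The Petersen graph: vertices are the 2-element subsets of a 5-element set,
adjacent iff disjoint. -/
def petersen : SimpleGraph {s : Finset (Fin 5) // s.card = 2} where
  Adj a b := Disjoint a.1 b.1
  symm := ⟨fun a b h => h.symm⟩
  loopless := ⟨fun a h => by
    have h0 : a.1 = ∅ := by simpa using disjoint_self.mp h
    have h2 := a.2
    rw [h0] at h2
    simp at h2⟩

def f1 : ZMod 10 → ZMod 10 := fun i => ![0, 1, 8, 9, 6, 7, 4, 5, 2, 3] i

def f2 : ZMod 10 → ZMod 10 := fun i => ![0, 1, 6, 2, 7, 3, 8, 4, 9, 5] i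

lemma circ_adj (D : Set (ZMod 10)) (a b : ZMod 10) :
    (circ D).Adj a b ↔ a ≠ b ∧ (a - b ∈ D ∨ b - a ∈ D) := by
  simp [circ, SimpleGraph.fromRel_adj]

theorem stmt_13_aux :
    (∃ f : circ {4, 5} →g circ {3, 4}, Function.Injective f) ∧
    (∃ f : circ {4, 5} →g circ {2, 3}, Function.Injective f) := by
  constructor
  · refine ⟨⟨f1, ?_⟩, ?_⟩
    · intro a b h
      rw [circ_adj] at h ⊢
      simp only [Set.mem_insert_iff, Set.mem_singleton_iff] at h ⊢
      revert h; revert a b; decide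
    · intro a b h; revert h; revert a b; decide
  · refine ⟨⟨f2, ?_⟩, ?_⟩
    · intro a b h
      rw [circ_adj] at h ⊢
      simp only [Set.mem_insert_iff, Set.mem_singleton_iff] at h ⊢
      revert h; revert a b; decide
    · intro a b h; revert h; revert a b; decide

/-- Subgraph embeddings: `G_{{4,5}} ↪ G_{{3,4}}` and `G_{{4,5}} ↪ G_{{2,3}}`. -/
theorem stmt_13 :
    (∃ f : circ {4, 5} →g circ {3, 4}, Function.Injective f) ∧
    (∃ f : circ {4, 5} →g circ {2, 3}, Function.Injective f) := by
  exact stmt_13_aux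
end

section
/- The circulant graph G_{{3,5}} embeds as a subgraph into the circulant graph G_{{1,3}}: G_{{3,5}} ↪ G_{{1,3}}. Moreover, G_{{3,5}} embeds as a subgraph into G_{{2,3,4}}: G_{{3,5}} ↪ G_{{2,3,4}}. -/
open SimpleGraph

def embF1 : ZMod 10 → ZMod 10 := fun x => ![0,1,6,3,8,7,2,9,4,5] x
def embF2 : ZMod 10 → ZMod 10 := fun x => ![0,1,2,3,8,4,9,6,7,5] x

/-- Subgraph embeddings: `G_{{3,5}} ↪ G_{{1,3}}` and `G_{{3,5}} ↪ G_{{2,3,4}}`. -/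
theorem stmt_14 :
    (∃ f : circ {3, 5} →g circ {1, 3}, Function.Injective f) ∧
    (∃ f : circ {3, 5} →g circ {2, 3, 4}, Function.Injective f) := by
  constructor
  · refine ⟨⟨embF1, ?_⟩, ?_⟩
    · intro a b h
      simp only [circ, fromRel_adj, Set.mem_insert_iff, Set.mem_singleton_iff] at h ⊢
      revert h; revert a b; decide
    · intro a b; revert a b; decide
  · refine ⟨⟨embF2, ?_⟩, ?_⟩
    · intro a b h
      simp only [circ, fromRel_adj, Set.mem_insert_iff, Set.mem_singleton_iff] at h ⊢
      revert h; revert a b; decide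
    · intro a b; revert a b; decide
end
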